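/- For a cubic polynomial force in sparse form and a two-mode displacement η = η_r e_r + η_s e_s with r < s < j, the tangent stiffness satisfies K̃ᵗᵢⱼ − K̃¹ᵢⱼ = K̄²ᵢᵣⱼ η_r + K̄²ᵢₛⱼ η_s + K̄³ᵢᵣₛⱼ η_r η_s + K̄³ᵢᵣᵣⱼ η_r² + K̄³ᵢₛₛⱼ η_s²; hence if η_r η_s ≠ 0 and all other coefficients are known, K̄³ᵢᵣₛⱼ is uniquely determined. -/

import Mathlib

open Finset
noncomputable def pr {m : ℕ} (a : Fin m) : (Fin m → ℝ) →L[ℝ] ℝ := ContinuousLinearMap.proj a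

@[simp] lemma pr_apply {m : ℕ} (a : Fin m) (x : Fin m → ℝ) : pr a x = x a := rfl

theorem hder {m : ℕ} (K1 : Fin m → Fin m → ℝ) (KB2 : Fin m → Fin m → Fin m → ℝ)
    (KB3 : Fin m → Fin m → Fin m → Fin m → ℝ) (η : Fin m → ℝ) (i : Fin m) :
    HasFDerivAt (fun x : Fin m → ℝ => (∑ j, K1 i j * x j)
        + (∑ j, ∑ k, KB2 i j k * x j * x k)
        + ∑ j, ∑ k, ∑ l, KB3 i j k l * x j * x k * x l)
      ((∑ a, (K1 i a) • pr a)
       + (∑ a, ∑ b, ((KB2 i a b * η a) • pr b + (η b) • ((KB2 i a b) • pr a)))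
       + (∑ a, ∑ b, ∑ c, ((KB3 i a b c * η a * η b) • pr c
            + (η c) • ((KB3 i a b c * η a) • pr b + (η b) • ((KB3 i a b c) • pr a))))) η := by
  have hp : ∀ a : Fin m, HasFDerivAt (fun x : Fin m → ℝ => x a) (pr a) η :=
    fun a => hasFDerivAt_apply (𝕜 := ℝ) a η
  exact ((HasFDerivAt.fun_sum fun a _ => (hp a).const_mul _).add
      (HasFDerivAt.fun_sum fun a _ => HasFDerivAt.fun_sum fun b _ =>
        ((hp a).const_mul _).fun_mul (hp b))).add
    (HasFDerivAt.fun_sum fun a _ => HasFDerivAt.fun_sum fun b _ => HasFDerivAt.fun_sum fun c _ =>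
      (((hp a).const_mul _).fun_mul (hp b)).fun_mul (hp c))


lemma sum_if_const {α : Type*} [Fintype α] (P : Prop) [Decidable P] (g : α → ℝ) :
    ∑ x, (if P then g x else 0) = if P then ∑ x, g x else 0 := by
  split <;> simp

lemma sum_ite_two {m : ℕ} (r s : Fin m) (h : r ≠ s) (F G : Fin m → ℝ) :
    ∑ p, (if p = r then F p else if p = s then G p else 0) = F r + G s := by
  have e : ∀ p, (if p = r then F p else if p = s then G p else 0)
      = (if p = r then F p else 0) + (if p = s then G p else 0) := by
    intro p; split_ifs with h1 h2 <;> simp_all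
  simp [e, Finset.sum_add_distrib, Finset.sum_ite_eq']

theorem key {m : ℕ} (K1 : Fin m → Fin m → ℝ) (KB2 : Fin m → Fin m → Fin m → ℝ)
    (KB3 : Fin m → Fin m → Fin m → Fin m → ℝ)
    (hKB2 : ∀ i j k, ¬ j ≤ k → KB2 i j k = 0)
    (hKB3 : ∀ i j k l, ¬ (j ≤ k ∧ k ≤ l) → KB3 i j k l = 0)
    (f : (Fin m → ℝ) → Fin m → ℝ)
    (hf : ∀ η i, f η i = (∑ j, K1 i j * η j) + (∑ j, ∑ k, KB2 i j k * η j * η k)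
      + ∑ j, ∑ k, ∑ l, KB3 i j k l * η j * η k * η l)
    (r s j : Fin m) (hrs : r < s) (hsj : s < j) (ηr ηs : ℝ) (i : Fin m) :
    fderiv ℝ (fun x => f x i) (fun p => if p = r then ηr else if p = s then ηs else 0)
      (Pi.single j 1) - K1 i j =
      KB2 i r j * ηr + KB2 i s j * ηs + KB3 i r s j * (ηr * ηs)
        + KB3 i r r j * ηr ^ 2 + KB3 i s s j * ηs ^ 2 := by
  set η : Fin m → ℝ := fun p => if p = r then ηr else if p = s then ηs else 0 with hη
  have hfe : (fun x => f x i) = fun x : Fin m → ℝ => (∑ j, K1 i j * x j)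
        + (∑ j, ∑ k, KB2 i j k * x j * x k)
        + ∑ j, ∑ k, ∑ l, KB3 i j k l * x j * x k * x l := funext fun x => hf x i
  rw [hfe, (hder K1 KB2 KB3 η i).fderiv]
  simp only [ContinuousLinearMap.add_apply, ContinuousLinearMap.sum_apply,
    ContinuousLinearMap.smul_apply, pr_apply, smul_eq_mul, Pi.single_apply]
  simp only [mul_ite, ite_mul, mul_zero, zero_mul, mul_one, one_mul,
    Finset.sum_ite_eq', Finset.mem_univ, if_true]
  simp only [sum_if_const, Finset.sum_add_distrib, Finset.sum_ite_eq', Finset.mem_univ,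
    if_true]
  simp only [hη]
  simp only [mul_ite, ite_mul, mul_zero, zero_mul, sum_ite_two r s hrs.ne]
  simp only [mul_add, mul_ite, mul_zero, sum_if_const, Finset.sum_add_distrib,
    Finset.sum_ite_eq', Finset.mem_univ, if_true, sum_ite_two r s hrs.ne]
  have hjr : ¬ j ≤ r := not_le.mpr (hrs.trans hsj)
  have hjs : ¬ j ≤ s := not_le.mpr hsj
  have hsr : ¬ s ≤ r := not_le.mpr hrs
  have z1 : KB2 i j r = 0 := hKB2 _ _ _ hjr
  have z2 : KB2 i j s = 0 := hKB2 _ _ _ hjs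
  have z3 : KB3 i s r j = 0 := hKB3 _ _ _ _ (fun h => hsr h.1)
  have z4 : KB3 i r j r = 0 := hKB3 _ _ _ _ (fun h => hjr h.2)
  have z5 : KB3 i s j r = 0 := hKB3 _ _ _ _ (fun h => hjr h.2)
  have z6 : KB3 i j r r = 0 := hKB3 _ _ _ _ (fun h => hjr h.1)
  have z7 : KB3 i j s r = 0 := hKB3 _ _ _ _ (fun h => hjs h.1)
  have z8 : KB3 i r j s = 0 := hKB3 _ _ _ _ (fun h => hjs h.2)
  have z9 : KB3 i s j s = 0 := hKB3 _ _ _ _ (fun h => hjs h.2)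
  have z10 : KB3 i j r s = 0 := hKB3 _ _ _ _ (fun h => hjr h.1)
  have z11 : KB3 i j s s = 0 := hKB3 _ _ _ _ (fun h => hjs h.1)
  rw [z1, z2, z3, z4, z5, z6, z7, z8, z9, z10, z11]
  ring

/-- for a two-mode displacement `η = ηᵣ eᵣ + ηₛ eₛ` with
`r < s < j`, the nonlinear tangent stiffness expression identifies the cubic
coefficient `K̄³ᵢᵣₛⱼ` uniquely whenever `ηᵣ ηₛ ≠ 0`. -/
theorem tangent_stiffness_two_mode
    {m : ℕ} (K1 : Fin m → Fin m → ℝ) (KB2 : Fin m → Fin m → Fin m → ℝ)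
    (KB3 : Fin m → Fin m → Fin m → Fin m → ℝ)
    (hKB2 : ∀ i j k, ¬ j ≤ k → KB2 i j k = 0)
    (hKB3 : ∀ i j k l, ¬ (j ≤ k ∧ k ≤ l) → KB3 i j k l = 0)
    (f : (Fin m → ℝ) → Fin m → ℝ)
    (hf : ∀ η i, f η i = (∑ j, K1 i j * η j) + (∑ j, ∑ k, KB2 i j k * η j * η k)
      + ∑ j, ∑ k, ∑ l, KB3 i j k l * η j * η k * η l)
    (Kt : (Fin m → ℝ) → Fin m → Fin m → ℝ)
    (hKt : ∀ η i j, Kt η i j = fderiv ℝ (fun x => f x i) η (Pi.single j 1))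
    (r s j : Fin m) (hrs : r < s) (hsj : s < j) (ηr ηs : ℝ) :
    ∀ i : Fin m,
      (Kt (fun p => if p = r then ηr else if p = s then ηs else 0) i j - K1 i j =
        KB2 i r j * ηr + KB2 i s j * ηs + KB3 i r s j * (ηr * ηs)
          + KB3 i r r j * ηr ^ 2 + KB3 i s s j * ηs ^ 2) ∧
      (ηr * ηs ≠ 0 →
        ∃! X : ℝ,
          Kt (fun p => if p = r then ηr else if p = s then ηs else 0) i j - K1 i j =
            KB2 i r j * ηr + KB2 i s j * ηs + X * (ηr * ηs)
              + KB3 i r r j * ηr ^ 2 + KB3 i s s j * ηs ^ 2) := by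
  intro i
  have hmain := key K1 KB2 KB3 hKB2 hKB3 f hf r s j hrs hsj ηr ηs i
  rw [← hKt] at hmain
  refine ⟨hmain, fun hne => ⟨KB3 i r s j, hmain, fun X hX => ?_⟩⟩
  have := hX.symm.trans hmain
  have h2 : X * (ηr * ηs) = KB3 i r s j * (ηr * ηs) := by linarith
  exact mul_right_cancel₀ hne h2
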